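/- Let C, G^{(1)}, …, G^{(ξ)} ∈ ℝ^{n_x×m_a}, Q̄ ∈ ℝ^{n_s×n_x}, Ȳ ∈ ℝ^{n_s×m_a}, and R̄ ∈ ℝ^{n_s×m_a} with R̄ entrywise nonnegative. Let N be the constrained matrix zonotope with center C, generators G^{(1)}, …, G^{(ξ)} followed by n_s·m_a zero-matrix generators, constraint matrices Q̄G^{(1)}, …, Q̄G^{(ξ)} followed by the matrices −E_i R̄ E_j for i ∈ {1,…,n_s}, j ∈ {1,…,m_a} (where E_i = diag(e_i) ∈ ℝ^{n_s×n_s} and E_j = diag(e_j) ∈ ℝ^{m_a×m_a}), and constraint offset B = Ȳ − Q̄C. Then every Θ ∈ N satisfies the entrywise bound |Q̄Θ − Ȳ| ≤ R̄, i.e., |(Q̄Θ − Ȳ)_{ij}| ≤ R̄_{ij} for all i, j. -/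

import Mathlib

open Matrix

/-- Every element `Θ` of the constrained matrix zonotope with
center `C`, generators `G^{(i)}` followed by zero generators, constraint
matrices `Q̄G^{(i)}` followed by `−E_i R̄ E_j`, and offset `B = Ȳ − Q̄C`,
satisfies the entrywise bound `|Q̄Θ − Ȳ| ≤ R̄` (for `R̄` entrywise
nonnegative). -/
theorem stmt_12 {nx ma ns ξ : ℕ}
    (C : Matrix (Fin nx) (Fin ma) ℝ) (G : Fin ξ → Matrix (Fin nx) (Fin ma) ℝ)
    (Q : Matrix (Fin ns) (Fin nx) ℝ) (Y R : Matrix (Fin ns) (Fin ma) ℝ)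
    (hR : ∀ i j, 0 ≤ R i j)
    (Θ : Matrix (Fin nx) (Fin ma) ℝ)
    (hmem : ∃ β : Fin ξ ⊕ (Fin ns × Fin ma) → ℝ, (∀ i, |β i| ≤ 1) ∧
      (∑ i : Fin ξ ⊕ (Fin ns × Fin ma), β i •
          (Sum.elim (fun i => Q * G i)
            (fun p : Fin ns × Fin ma =>
              -(Matrix.single p.1 p.2 (R p.1 p.2))) i)) = Y - Q * C ∧
      Θ = C + ∑ i : Fin ξ ⊕ (Fin ns × Fin ma), β i •
          (Sum.elim G (fun _ : Fin ns × Fin ma =>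
            (0 : Matrix (Fin nx) (Fin ma) ℝ)) i)) :
    ∀ i j, |(Q * Θ - Y) i j| ≤ R i j := by
  obtain ⟨β, hβ, hc, hΘ⟩ := hmem
  have h1 : Q * Θ = Q * C + ∑ i : Fin ξ, β (.inl i) • (Q * G i) := by
    subst hΘ
    rw [Matrix.mul_add, Matrix.mul_sum]
    congr 1
    rw [Fintype.sum_sum_type]
    simp [Matrix.mul_smul]
  rw [Fintype.sum_sum_type] at hc
  have key : Q * Θ - Y = ∑ p : Fin ns × Fin ma,
      β (.inr p) • Matrix.single p.1 p.2 (R p.1 p.2) := by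
    simp only [Sum.elim_inl, Sum.elim_inr, smul_neg, Finset.sum_neg_distrib,
      ← sub_eq_add_neg] at hc
    have h2 := sub_eq_iff_eq_add.mp hc
    rw [h1, h2]; abel
  intro i j
  have he : (Q * Θ - Y) i j = β (.inr (i, j)) * R i j := by
    rw [key, Matrix.sum_apply, Fintype.sum_prod_type]
    simp [Matrix.single, mul_ite, ite_and, Finset.sum_ite_eq, Finset.sum_ite_eq']
  rw [he, abs_mul, abs_of_nonneg (hR i j)]
  calc |β (.inr (i, j))| * R i j ≤ 1 * R i j :=
        mul_le_mul_of_nonneg_right (hβ _) (hR i j)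
    _ = R i j := one_mul _
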